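/- Let d ≥ 1, let X₁,…,Xₙ be i.i.d. ℝ^d-valued random variables whose common law has density f with respect to Lebesgue measure, let H be an invertible d×d real matrix, and let K : ℝ^d → ℝ be bounded, measurable and compactly supported. Then for all x, t ∈ ℝ^d, the variance of |det H| · (1/n) ∑_{i=1}^n K_H(X_i − x) K_H(X_i − t) is at most (1/(n·|det H|)) ∫_{ℝ^d} K(p)² · K(p − H⁻¹(x − t))² · f(t + Hp) dp. -/

import Mathlib

open MeasureTheory ProbabilityTheory Filter
open scoped ENNReal NNReal Topology

noncomputable section

/-- The rescaled kernel `K_H(v) = |det H|⁻¹ * K (H⁻¹ v)`. -/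
def kernelScaled {d : ℕ} (H : Matrix (Fin d) (Fin d) ℝ) (K : (Fin d → ℝ) → ℝ)
    (v : Fin d → ℝ) : ℝ :=
  |H.det|⁻¹ * K (H⁻¹.mulVec v)

/-- Change of variables `y = t + H p` for the Lebesgue integral. -/
lemma integral_comp_add_mulVec {d : ℕ} (H : Matrix (Fin d) (Fin d) ℝ) (hH : H.det ≠ 0)
    (t : Fin d → ℝ) (g : (Fin d → ℝ) → ℝ) (hg : Measurable g) :
    ∫ p, g (t + H.mulVec p) = |H.det|⁻¹ * ∫ y, g y := by
  have hdet : LinearMap.det (Matrix.mulVecLin H) ≠ 0 := by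
    rw [← Matrix.toLin'_apply', LinearMap.det_toLin']
    exact hH
  have hmeasL : Measurable (Matrix.mulVecLin H) :=
    (Matrix.mulVecLin H).continuous_of_finiteDimensional.measurable
  have hgt : Measurable fun y => g (t + y) :=
    hg.comp (measurable_const.add measurable_id)
  have hmap : Measure.map (Matrix.mulVecLin H) volume
      = ENNReal.ofReal |(LinearMap.det (Matrix.mulVecLin H))⁻¹| • volume :=
    Measure.map_linearMap_addHaar_pi_eq_smul_addHaar hdet volume
  have h1 : ∫ y, g (t + y) ∂(Measure.map (Matrix.mulVecLin H) volume)
      = ∫ p, g (t + H.mulVec p) := by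
    rw [integral_map hmeasL.aemeasurable hgt.aestronglyMeasurable]
    simp only [Matrix.mulVecLin_apply]
  rw [← h1, hmap, integral_smul_measure, ENNReal.toReal_ofReal (abs_nonneg _),
    integral_add_left_eq_self g t]
  have : LinearMap.det (Matrix.mulVecLin H) = H.det := by
    rw [← Matrix.toLin'_apply', LinearMap.det_toLin']
  rw [this, abs_inv, smul_eq_mul]

/-- Variance bound in Lemma 2:
`Var(|det H| W₂ₙ(x,t)) ≤ (1/(n |det H|)) ∫ K(p)² K(p − H⁻¹(x−t))² f(t + Hp) dp`. -/
theorem variance_W2n {d n : ℕ} (hd : 1 ≤ d) (hn : 1 ≤ n)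
    {Ω : Type*} [MeasurableSpace Ω] (μ : Measure Ω) [IsProbabilityMeasure μ]
    (X : Fin n → Ω → (Fin d → ℝ)) (hXmeas : ∀ i, Measurable (X i))
    (hindep : iIndepFun X μ)
    (f : (Fin d → ℝ) → ℝ) (hfmeas : Measurable f) (hfnonneg : ∀ y, 0 ≤ f y)
    (hlaw : ∀ i, μ.map (X i) = volume.withDensity (fun y => ENNReal.ofReal (f y)))
    (H : Matrix (Fin d) (Fin d) ℝ) (hH : H.det ≠ 0)
    (K : (Fin d → ℝ) → ℝ) (hKmeas : Measurable K) (hKbd : ∃ C, ∀ u, |K u| ≤ C)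
    (hKsupp : HasCompactSupport K)
    (x t : Fin d → ℝ) :
    variance (fun ω => |H.det| *
        ((n : ℝ)⁻¹ * ∑ i, kernelScaled H K (X i ω - x) * kernelScaled H K (X i ω - t))) μ ≤
      ((n : ℝ) * |H.det|)⁻¹ *
        ∫ p, (K p) ^ 2 * (K (p - H⁻¹.mulVec (x - t))) ^ 2 * f (t + H.mulVec p) := by
  obtain ⟨C, hC⟩ := hKbd
  have hC0 : 0 ≤ C := (abs_nonneg _).trans (hC 0)
  have ha : (0:ℝ) < |H.det| := abs_pos.2 hH
  have hn0 : (n:ℝ) ≠ 0 := by positivity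
  set a := |H.det| with haa
  set φ : (Fin d → ℝ) → ℝ := fun y =>
    a * ((n : ℝ)⁻¹ * (kernelScaled H K (y - x) * kernelScaled H K (y - t))) with hφ
  have hmulV : Measurable fun v : Fin d → ℝ => H⁻¹.mulVec v := by
    have := (Matrix.mulVecLin H⁻¹).continuous_of_finiteDimensional.measurable
    exact this
  have hKS : ∀ c : Fin d → ℝ, Measurable fun y => kernelScaled H K (y - c) := by
    intro c
    unfold kernelScaled
    exact measurable_const.mul (hKmeas.comp (hmulV.comp (measurable_id.sub measurable_const)))
  have hφm : Measurable φ := measurable_const.mul (measurable_const.mul ((hKS x).mul (hKS t)))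
  have hks_bd : ∀ v, |kernelScaled H K v| ≤ a⁻¹ * C := by
    intro v
    rw [kernelScaled, abs_mul, abs_inv, abs_abs]
    exact mul_le_mul_of_nonneg_left (hC _) (inv_nonneg.2 ha.le)
  have hφbd : ∀ y, |φ y| ≤ a * ((n:ℝ)⁻¹ * ((a⁻¹ * C) * (a⁻¹ * C))) := by
    intro y
    have h1 : |φ y| = a * ((n:ℝ)⁻¹ *
        (|kernelScaled H K (y - x)| * |kernelScaled H K (y - t)|)) := by
      rw [hφ]
      rw [abs_mul, abs_mul, abs_mul, abs_of_nonneg ha.le, abs_inv, Nat.abs_cast]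
    rw [h1]
    have hx1 := hks_bd (y - x)
    have hx2 := hks_bd (y - t)
    gcongr
  have hmem : ∀ i : Fin n, MemLp (fun ω => φ (X i ω)) 2 μ := fun i =>
    (memLp_top_of_bound ((hφm.comp (hXmeas i)).aestronglyMeasurable) _
      (Filter.Eventually.of_forall fun ω => by
        simpa [Real.norm_eq_abs] using hφbd (X i ω))).mono_exponent le_top
  have hfun : (fun ω => a *
        ((n : ℝ)⁻¹ * ∑ i, kernelScaled H K (X i ω - x) * kernelScaled H K (X i ω - t)))
      = ∑ i : Fin n, fun ω => φ (X i ω) := by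
    funext ω
    simp only [Finset.sum_apply, hφ, Finset.mul_sum]
  rw [hfun, IndepFun.variance_sum (fun i _ => hmem i)
    (fun i _ j _ hij => (hindep.indepFun hij).comp hφm hφm)]
  -- the target integrand
  set G : (Fin d → ℝ) → ℝ :=
    fun p => (K p) ^ 2 * (K (p - H⁻¹.mulVec (x - t))) ^ 2 * f (t + H.mulVec p) with hG
  set ψ : (Fin d → ℝ) → ℝ :=
    fun y => K (H⁻¹.mulVec (y - x)) ^ 2 * K (H⁻¹.mulVec (y - t)) ^ 2 * f y with hψ
  have hψm : Measurable ψ := by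
    apply Measurable.mul
    apply Measurable.mul
    · exact (hKmeas.comp (hmulV.comp (measurable_id.sub measurable_const))).pow_const 2
    · exact (hKmeas.comp (hmulV.comp (measurable_id.sub measurable_const))).pow_const 2
    · exact hfmeas
  have hinvmul : ∀ p : Fin d → ℝ, H⁻¹.mulVec (H.mulVec p) = p := by
    intro p
    rw [Matrix.mulVec_mulVec, Matrix.nonsing_inv_mul H (isUnit_iff_ne_zero.2 hH),
      Matrix.one_mulVec]
  have hGψ : ∀ p, G p = ψ (t + H.mulVec p) := by
    intro p
    have e1 : H⁻¹.mulVec (t + H.mulVec p - t) = p := by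
      rw [add_sub_cancel_left, hinvmul]
    have e2 : H⁻¹.mulVec (t + H.mulVec p - x) = p - H⁻¹.mulVec (x - t) := by
      have e3 : t + H.mulVec p - x = H.mulVec p - (x - t) := by abel
      rw [e3, Matrix.mulVec_sub, hinvmul]
    simp only [hG, hψ, e1, e2]
    ring
  have hcov : ∫ p, G p = a⁻¹ * ∫ y, ψ y := by
    calc ∫ p, G p = ∫ p, ψ (t + H.mulVec p) := by simp_rw [hGψ]
      _ = a⁻¹ * ∫ y, ψ y := integral_comp_add_mulVec H hH t ψ hψm
  have hvar : ∀ i : Fin n, variance (fun ω => φ (X i ω)) μ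
      ≤ ((n:ℝ)^2 * a)⁻¹ * ∫ p, G p := by
    intro i
    have h0 : variance (fun ω => φ (X i ω)) μ ≤ μ[(fun ω => φ (X i ω)) ^ 2] :=
      variance_le_expectation_sq (hφm.comp (hXmeas i)).aestronglyMeasurable
    have h1 : μ[(fun ω => φ (X i ω)) ^ 2] = ∫ y, (φ y) ^ 2 ∂(μ.map (X i)) := by
      rw [integral_map (hXmeas i).aemeasurable (hφm.pow_const 2).aestronglyMeasurable]
      simp only [Pi.pow_apply]
    have h2 : (∫ y, (φ y) ^ 2 ∂(μ.map (X i))) = ∫ y, f y * (φ y) ^ 2 := by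
      rw [hlaw i]
      have hofReal : (fun y => ENNReal.ofReal (f y))
          = fun y => ((f y).toNNReal : ℝ≥0∞) := rfl
      rw [hofReal, integral_withDensity_eq_integral_smul hfmeas.real_toNNReal]
      congr 1
      funext y
      rw [NNReal.smul_def, smul_eq_mul, Real.coe_toNNReal _ (hfnonneg y)]
    have h3 : ∀ y, f y * (φ y) ^ 2 = ((n:ℝ)^2 * a^2)⁻¹ * ψ y := by
      intro y
      rw [hφ, hψ]
      simp only [kernelScaled]
      have haA : a = |H.det| := haa
      rw [← haA]
      field_simp
    have h4 : (∫ y, f y * (φ y) ^ 2) = ((n:ℝ)^2 * a^2)⁻¹ * ∫ y, ψ y := by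
      simp_rw [h3]
      rw [integral_const_mul]
    have h5 : ((n:ℝ)^2 * a^2)⁻¹ * ∫ y, ψ y = ((n:ℝ)^2 * a)⁻¹ * ∫ p, G p := by
      have e : ((n:ℝ)^2 * a^2)⁻¹ = ((n:ℝ)^2 * a)⁻¹ * a⁻¹ := by
        rw [← mul_inv]; ring_nf
      rw [hcov, e, mul_assoc]
    calc variance (fun ω => φ (X i ω)) μ ≤ μ[(fun ω => φ (X i ω)) ^ 2] := h0
      _ = ((n:ℝ)^2 * a)⁻¹ * ∫ p, G p := by rw [h1, h2, h4, h5]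
  calc ∑ i : Fin n, variance (fun ω => φ (X i ω)) μ
      ≤ ∑ _i : Fin n, (((n:ℝ)^2 * a)⁻¹ * ∫ p, G p) :=
        Finset.sum_le_sum fun i _ => hvar i
    _ = ((n:ℝ) * a)⁻¹ * ∫ p, G p := by
        rw [Finset.sum_const, Finset.card_univ, Fintype.card_fin, nsmul_eq_mul]
        field_simp
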